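/- Let R₁ and R₂ denote inversions (reflections) with respect to the circles ∂B₁ and ∂B₂, where B₁ and B₂ are disjoint open disks in ℝ² with positive distance between their closures. Then the composition R₁ ∘ R₂, restricted to the closed disk B̄₁, is a contraction mapping of B̄₁ into itself, and hence has a unique fixed point p₁ ∈ B₁. -/

import Mathlib

open Metric

noncomputable def circleReflection (c : ℂ) (r : ℝ) (x : ℂ) : ℂ :=
  c + (r ^ 2 / ‖x - c‖ ^ 2) • (x - c)

lemma conj_sub_ne_zero {x c : ℂ} (hx : x ≠ c) : (starRingEnd ℂ) (x - c) ≠ 0 := by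
  rw [starRingEnd_apply]
  exact star_ne_zero.2 (sub_ne_zero.2 hx)

lemma circleReflection_eq (c : ℂ) (r : ℝ) {x : ℂ} (hx : x ≠ c) :
    circleReflection c r x = c + (r ^ 2 : ℂ) / (starRingEnd ℂ) (x - c) := by
  have h : x - c ≠ 0 := sub_ne_zero.2 hx
  have hc : (starRingEnd ℂ) (x - c) ≠ 0 := conj_sub_ne_zero hx
  have hnorm : ((‖x - c‖ : ℂ)) ^ 2 = (x - c) * (starRingEnd ℂ) (x - c) := by
    rw [Complex.mul_conj]
    norm_cast
    rw [Complex.sq_norm]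
  unfold circleReflection
  rw [Complex.real_smul]
  push_cast
  rw [hnorm]
  generalize hu : (starRingEnd ℂ) (x - c) = u at hc ⊢
  generalize hv : x - c = v at h ⊢
  field_simp

lemma norm_conj_complex (z : ℂ) : ‖(starRingEnd ℂ) z‖ = ‖z‖ := RCLike.norm_conj z

lemma norm_r2 (r : ℝ) : ‖((r : ℂ)) ^ 2‖ = r ^ 2 := by
  rw [norm_pow, Complex.norm_real, Real.norm_eq_abs, sq_abs]

lemma circleReflection_norm (c : ℂ) {r : ℝ} (hr : 0 ≤ r) {x : ℂ} (hx : x ≠ c) :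
    ‖circleReflection c r x - c‖ = r ^ 2 / ‖x - c‖ := by
  rw [circleReflection_eq c r hx, add_sub_cancel_left, norm_div]
  push_cast
  rw [norm_conj_complex, norm_r2]

lemma circleReflection_dist (c : ℂ) {r : ℝ} (hr : 0 ≤ r) {x y : ℂ} (hx : x ≠ c) (hy : y ≠ c) :
    dist (circleReflection c r x) (circleReflection c r y)
      = r ^ 2 * dist x y / (‖x - c‖ * ‖y - c‖) := by
  have hxc : (starRingEnd ℂ) (x - c) ≠ 0 := conj_sub_ne_zero hx
  have hyc : (starRingEnd ℂ) (y - c) ≠ 0 := conj_sub_ne_zero hy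
  rw [circleReflection_eq c r hx, circleReflection_eq c r hy, dist_eq_norm]
  have h2 : (starRingEnd ℂ) (y - c) - (starRingEnd ℂ) (x - c) = (starRingEnd ℂ) (y - x) := by
    rw [← map_sub]; ring_nf
  have key : c + (r ^ 2 : ℂ) / (starRingEnd ℂ) (x - c) - (c + (r ^ 2 : ℂ) / (starRingEnd ℂ) (y - c))
      = (r ^ 2 : ℂ) * (starRingEnd ℂ) (y - x)
        / ((starRingEnd ℂ) (x - c) * (starRingEnd ℂ) (y - c)) := by
    rw [← h2]
    generalize (starRingEnd ℂ) (x - c) = u at hxc ⊢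
    generalize (starRingEnd ℂ) (y - c) = v at hyc ⊢
    field_simp
    ring
  rw [key, norm_div, norm_mul, norm_mul]
  rw [norm_conj_complex, norm_conj_complex, norm_conj_complex]
  rw [dist_eq_norm, ← norm_neg (x - y), neg_sub]
  push_cast
  rw [norm_r2]

lemma exists_closedBall_dist {a b : ℂ} {r : ℝ} (hr : 0 ≤ r) (h : r < dist a b) :
    ∃ z ∈ closedBall a r, dist z b = dist a b - r := by
  have hab : dist a b ≠ 0 := (lt_of_le_of_lt hr h).ne'
  set s : ℝ := r / dist a b with hs
  have hs0 : 0 ≤ s := div_nonneg hr dist_nonneg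
  have hs1 : s ≤ 1 := by
    rw [hs, div_le_one (lt_of_le_of_lt hr h)]; exact h.le
  refine ⟨a + s • (b - a), ?_, ?_⟩
  · rw [mem_closedBall, dist_eq_norm, add_sub_cancel_left, norm_smul, Real.norm_eq_abs,
      abs_of_nonneg hs0, ← dist_eq_norm, dist_comm b a, hs, div_mul_cancel₀ _ hab]
  · have hz : a + s • (b - a) - b = (1 - s) • (a - b) := by module
    rw [dist_eq_norm, hz, norm_smul, Real.norm_eq_abs, abs_of_nonneg (by linarith),
      ← dist_eq_norm, sub_mul, one_mul, hs, div_mul_cancel₀ _ hab]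

/-- If `B₁ = B(c₁,r₁)` and `B₂ = B(c₂,r₂)` are open disks whose closures are at
positive distance, then `R₁ ∘ R₂` is a contraction of `B̄₁` into `B₁` and hence has a unique
fixed point `p₁ ∈ B₁`. -/
theorem stmt_4 (c₁ c₂ : ℂ) (r₁ r₂ : ℝ) (hr₁ : 0 < r₁) (hr₂ : 0 < r₂)
    (hsep : ∃ d > 0, ∀ x ∈ closedBall c₁ r₁, ∀ y ∈ closedBall c₂ r₂, d ≤ dist x y) :
    (∃ K : NNReal, K < 1 ∧
      LipschitzOnWith K (fun x => circleReflection c₁ r₁ (circleReflection c₂ r₂ x))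
        (closedBall c₁ r₁)) ∧
    Set.MapsTo (fun x => circleReflection c₁ r₁ (circleReflection c₂ r₂ x))
      (closedBall c₁ r₁) (ball c₁ r₁) ∧
    ∃! p : ℂ, p ∈ ball c₁ r₁ ∧ circleReflection c₁ r₁ (circleReflection c₂ r₂ p) = p := by
  obtain ⟨d, hd, hsep⟩ := hsep
  -- Step 1: every point of the first closed ball is at distance ≥ r₂ + d from c₂.
  have key2 : ∀ x ∈ closedBall c₁ r₁, r₂ + d ≤ ‖x - c₂‖ := by
    intro x hx
    have hgt : r₂ < dist c₂ x := by
      by_contra h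
      push_neg at h
      have := hsep x hx x (by rwa [mem_closedBall, dist_comm])
      simp at this; linarith
    obtain ⟨z, hz, hdz⟩ := exists_closedBall_dist hr₂.le hgt
    have := hsep x hx z hz
    rw [dist_comm] at this
    rw [← dist_eq_norm, dist_comm]
    linarith
  -- Step 2: distance between centers.
  have hcc : r₁ + r₂ + d ≤ dist c₁ c₂ := by
    have h1 : r₁ < dist c₁ c₂ := by
      by_contra h
      push_neg at h
      have := key2 c₂ (by rwa [mem_closedBall, dist_comm])
      simp at this; linarith
    obtain ⟨z, hz, hdz⟩ := exists_closedBall_dist hr₁.le h1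
    have := key2 z hz
    rw [← dist_eq_norm] at this
    linarith
  set e : ℝ := d * (2 * r₂ + d) / (r₂ + d) with he
  have he0 : 0 < e := by positivity
  set f : ℂ → ℂ := fun x => circleReflection c₁ r₁ (circleReflection c₂ r₂ x) with hf
  -- Step 3: after R₂, points are far from c₁.
  have hne2 : ∀ x ∈ closedBall c₁ r₁, x ≠ c₂ := by
    intro x hx h
    have := key2 x hx
    rw [h] at this; simp at this; linarith
  have key1 : ∀ x ∈ closedBall c₁ r₁, r₁ + e ≤ ‖circleReflection c₂ r₂ x - c₁‖ := by
    intro x hx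
    have h2 := key2 x hx
    have hn : ‖circleReflection c₂ r₂ x - c₂‖ = r₂ ^ 2 / ‖x - c₂‖ :=
      circleReflection_norm c₂ hr₂.le (hne2 x hx)
    have hle : ‖circleReflection c₂ r₂ x - c₂‖ ≤ r₂ ^ 2 / (r₂ + d) := by
      rw [hn]
      exact div_le_div_of_nonneg_left (by positivity) (by positivity) h2
    have htri : dist c₁ c₂ ≤ ‖circleReflection c₂ r₂ x - c₁‖ + ‖circleReflection c₂ r₂ x - c₂‖ := by
      rw [dist_eq_norm, ← norm_neg (circleReflection c₂ r₂ x - c₁)]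
      calc ‖c₁ - c₂‖ = ‖-(circleReflection c₂ r₂ x - c₁) + (circleReflection c₂ r₂ x - c₂)‖ := by
            ring_nf
          _ ≤ _ := norm_add_le _ _
    have harith : r₁ + e = r₁ + r₂ + d - r₂ ^ 2 / (r₂ + d) := by
      rw [he]; field_simp; ring
    linarith
  have hne1 : ∀ x ∈ closedBall c₁ r₁, circleReflection c₂ r₂ x ≠ c₁ := by
    intro x hx h
    have := key1 x hx
    rw [h] at this; simp at this; linarith
  -- Step 4: MapsTo.
  have hmaps : Set.MapsTo f (closedBall c₁ r₁) (ball c₁ r₁) := by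
    intro x hx
    have h1 := key1 x hx
    have hn : ‖f x - c₁‖ = r₁ ^ 2 / ‖circleReflection c₂ r₂ x - c₁‖ :=
      circleReflection_norm c₁ hr₁.le (hne1 x hx)
    rw [mem_ball, dist_eq_norm, hn]
    calc r₁ ^ 2 / ‖circleReflection c₂ r₂ x - c₁‖ ≤ r₁ ^ 2 / (r₁ + e) :=
          div_le_div_of_nonneg_left (by positivity) (by positivity) h1
      _ < r₁ := by
          rw [div_lt_iff₀ (by positivity)]
          nlinarith
  -- Step 5: Lipschitz bound with real constant.
  set K₀ : ℝ := (r₁ ^ 2 / (r₁ + e) ^ 2) * (r₂ ^ 2 / (r₂ + d) ^ 2) with hK₀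
  have hK₀0 : 0 ≤ K₀ := by positivity
  have hK₀1 : K₀ < 1 := by
    rw [hK₀]
    have h1 : r₁ ^ 2 / (r₁ + e) ^ 2 < 1 := by
      rw [div_lt_one (by positivity)]; nlinarith
    have h2 : r₂ ^ 2 / (r₂ + d) ^ 2 < 1 := by
      rw [div_lt_one (by positivity)]; nlinarith
    nlinarith [div_nonneg (sq_nonneg r₁) (sq_nonneg (r₁ + e)),
      div_nonneg (sq_nonneg r₂) (sq_nonneg (r₂ + d))]
  have hlip : ∀ x ∈ closedBall c₁ r₁, ∀ y ∈ closedBall c₁ r₁,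
      dist (f x) (f y) ≤ K₀ * dist x y := by
    intro x hx y hy
    have hd2 : dist (circleReflection c₂ r₂ x) (circleReflection c₂ r₂ y)
        ≤ (r₂ ^ 2 / (r₂ + d) ^ 2) * dist x y := by
      rw [circleReflection_dist c₂ hr₂.le (hne2 x hx) (hne2 y hy)]
      have h1 := key2 x hx
      have h2 := key2 y hy
      calc r₂ ^ 2 * dist x y / (‖x - c₂‖ * ‖y - c₂‖)
          ≤ r₂ ^ 2 * dist x y / ((r₂ + d) * (r₂ + d)) :=
            div_le_div_of_nonneg_left (by positivity) (by positivity)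
              (mul_le_mul h1 h2 (by positivity) (le_trans (by positivity) h1))
        _ = r₂ ^ 2 / (r₂ + d) ^ 2 * dist x y := by ring
    have hd1 : dist (f x) (f y)
        ≤ (r₁ ^ 2 / (r₁ + e) ^ 2) *
          dist (circleReflection c₂ r₂ x) (circleReflection c₂ r₂ y) := by
      rw [hf]
      simp only
      rw [circleReflection_dist c₁ hr₁.le (hne1 x hx) (hne1 y hy)]
      have h1 := key1 x hx
      have h2 := key1 y hy
      calc r₁ ^ 2 * dist (circleReflection c₂ r₂ x) (circleReflection c₂ r₂ y)
            / (‖circleReflection c₂ r₂ x - c₁‖ * ‖circleReflection c₂ r₂ y - c₁‖)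
          ≤ r₁ ^ 2 * dist (circleReflection c₂ r₂ x) (circleReflection c₂ r₂ y)
            / ((r₁ + e) * (r₁ + e)) :=
            div_le_div_of_nonneg_left (by positivity) (by positivity)
              (mul_le_mul h1 h2 (by positivity) (le_trans (by positivity) h1))
        _ = r₁ ^ 2 / (r₁ + e) ^ 2
            * dist (circleReflection c₂ r₂ x) (circleReflection c₂ r₂ y) := by ring
    calc dist (f x) (f y) ≤ _ := hd1
      _ ≤ (r₁ ^ 2 / (r₁ + e) ^ 2) * ((r₂ ^ 2 / (r₂ + d) ^ 2) * dist x y) := by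
          exact mul_le_mul_of_nonneg_left hd2 (by positivity)
      _ = K₀ * dist x y := by rw [hK₀]; ring
  set K : NNReal := K₀.toNNReal with hKdef
  have hKcoe : (K : ℝ) = K₀ := Real.coe_toNNReal _ hK₀0
  have hK1 : K < 1 := by
    rw [← NNReal.coe_lt_coe, hKcoe, NNReal.coe_one]
    exact hK₀1
  have hlipOn : LipschitzOnWith K f (closedBall c₁ r₁) := by
    apply LipschitzOnWith.of_dist_le_mul
    intro x hx y hy
    rw [hKcoe]
    exact hlip x hx y hy
  -- Step 6: fixed point.
  have hmaps' : Set.MapsTo f (closedBall c₁ r₁) (closedBall c₁ r₁) :=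
    fun x hx => ball_subset_closedBall (hmaps hx)
  have hcontr : ContractingWith K (hmaps'.restrict f _ _) :=
    ⟨hK1, hlipOn.mapsToRestrict hmaps'⟩
  obtain ⟨p, hps, hpfix, -, -⟩ := hcontr.exists_fixedPoint' isClosed_closedBall.isComplete hmaps'
    (mem_closedBall_self hr₁.le) (edist_ne_top _ _)
  have hpball : p ∈ ball c₁ r₁ := by
    have := hmaps hps
    rwa [hpfix] at this
  refine ⟨⟨K, hK1, hlipOn⟩, hmaps, p, ⟨hpball, hpfix⟩, ?_⟩
  rintro q ⟨hq, hqfix⟩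
  have hq' : q ∈ closedBall c₁ r₁ := ball_subset_closedBall hq
  have h := hlip q hq' p hps
  have hfq : f q = q := hqfix
  have hfp : f p = p := hpfix
  rw [hfq, hfp] at h
  have : dist q p = 0 := by nlinarith [dist_nonneg (x := q) (y := p)]
  exact dist_eq_zero.1 this
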